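/- Let 𝒜 be the free (noncommutative, unital) R-algebra on six generators a₁₂, a₁₃, a₂₁, a₂₃, a₃₁, a₃₂, and consider the 3×3 matrices over 𝒜: A = [[1+μ, a₁₂, a₁₃], [a₂₁, 1+μ, a₂₃], [a₃₁, a₃₂, 1+μ]], Ψ^L = [[−a₂₁, μ, λ], [1, −a₃₂, μ], [μ, 1, −a₁₃]], Ψ^R = [[−a₁₂, μ, 1], [1, −a₂₃, μ], [λ⁻¹μ, 1, −a₃₁]]. Let C be the quotient of 𝒜 by the two-sided ideal generated by the 18 entries of the matrices Ψ^L·A and A·Ψ^R. Then in C the following identities hold among the images of the generators: a₃₁ = λ⁻¹·a₂₁, a₁₃ = λ·a₁₂, a₃₂ = a₁₂, a₂₃ = a₂₁, a₂₃ = a₁₃, and consequently a₂₁ = λ·a₁₂, so that C is generated as an R-algebra by the image of a₁₂. -/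

import Mathlib

noncomputable section

/-- The Laurent polynomial ring `ℤ[λ^{±1}, μ^{±1}]`. -/
abbrev R : Type := AddMonoidAlgebra ℤ (ℤ × ℤ)

/-- The variable `λ`. -/
def lam : R := AddMonoidAlgebra.single (1, 0) 1

/-- The Laurent monomial `λ⁻¹`. -/
def lamInv : R := AddMonoidAlgebra.single (-1, 0) 1

/-- The variable `μ`. -/
def mu : R := AddMonoidAlgebra.single (0, 1) 1

/-- The Laurent monomial `λ⁻¹μ`. -/
def lamInvMu : R := AddMonoidAlgebra.single (-1, 1) 1

/-- Index type of the six generators `a_{ij}`, `1 ≤ i ≠ j ≤ 3`. -/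
abbrev Idx : Type := {p : Fin 3 × Fin 3 // p.1 ≠ p.2}

/-- The free noncommutative unital `R`-algebra on the six generators. -/
abbrev FA : Type := FreeAlgebra R Idx

/-- The generator `a_{ij}` (indices from `0`, so `a 0 1` is the paper's `a₁₂`). -/
def a (i j : Fin 3) (h : i ≠ j) : FA := FreeAlgebra.ι R ⟨(i, j), h⟩

/-- The matrix `A` of the left-handed trefoil. -/
def Amat : Matrix (Fin 3) (Fin 3) FA :=
  !![algebraMap R FA (1 + mu), a 0 1 (by decide), a 0 2 (by decide);
     a 1 0 (by decide), algebraMap R FA (1 + mu), a 1 2 (by decide);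
     a 2 0 (by decide), a 2 1 (by decide), algebraMap R FA (1 + mu)]

/-- The matrix `Ψ^L` of the left-handed trefoil. -/
def PsiL : Matrix (Fin 3) (Fin 3) FA :=
  !![-(a 1 0 (by decide)), algebraMap R FA mu, algebraMap R FA lam;
     1, -(a 2 1 (by decide)), algebraMap R FA mu;
     algebraMap R FA mu, 1, -(a 0 2 (by decide))]

/-- The matrix `Ψ^R` of the left-handed trefoil. -/
def PsiR : Matrix (Fin 3) (Fin 3) FA :=
  !![-(a 0 1 (by decide)), algebraMap R FA mu, 1;
     1, -(a 1 2 (by decide)), algebraMap R FA mu;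
     algebraMap R FA lamInvMu, 1, -(a 2 0 (by decide))]

/-- The 18 relations: the entries of `Ψ^L·A` and `A·Ψ^R` are set to `0`. -/
inductive TrefoilRel : FA → FA → Prop
  | left (i j : Fin 3) : TrefoilRel ((PsiL * Amat) i j) 0
  | right (i j : Fin 3) : TrefoilRel ((Amat * PsiR) i j) 0

/-- The cord algebra of the left-handed trefoil, presented by generators and
relations. -/
abbrev CTref : Type := RingQuot TrefoilRel

/-- The canonical quotient map to the cord algebra. -/
def q : FA →ₐ[R] CTref := RingQuot.mkAlgHom R TrefoilRel


def muInv : R := AddMonoidAlgebra.single (0, -1) 1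
def lamMuInv : R := AddMonoidAlgebra.single (1, -1) 1

lemma lamInv_mul_lam : lamInv * lam = (1 : R) := by
  rw [lamInv, lam, AddMonoidAlgebra.single_mul_single]
  norm_num
  rfl

lemma muInv_mul_mu : muInv * mu = (1 : R) := by
  rw [muInv, mu, AddMonoidAlgebra.single_mul_single]
  norm_num
  rfl

lemma lamMuInv_mul_lamInvMu : lamMuInv * lamInvMu = (1 : R) := by
  rw [lamMuInv, lamInvMu, AddMonoidAlgebra.single_mul_single]
  norm_num
  rfl

lemma lamMuInv_mul_mu : lamMuInv * mu = lam := by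
  rw [lamMuInv, mu, lam, AddMonoidAlgebra.single_mul_single]
  norm_num

/-- In the cord algebra of the left-handed trefoil one has
`a₃₁ = λ⁻¹a₂₁`, `a₁₃ = λa₁₂`, `a₃₂ = a₁₂`, `a₂₃ = a₂₁`, `a₂₃ = a₁₃`, hence
`a₂₁ = λa₁₂`, and the algebra is generated by the image of `a₁₂`. -/
theorem trefoil_generator_relations :
    q (a 2 0 (by decide)) = algebraMap R CTref lamInv * q (a 1 0 (by decide)) ∧
    q (a 0 2 (by decide)) = algebraMap R CTref lam * q (a 0 1 (by decide)) ∧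
    q (a 2 1 (by decide)) = q (a 0 1 (by decide)) ∧
    q (a 1 2 (by decide)) = q (a 1 0 (by decide)) ∧
    q (a 1 2 (by decide)) = q (a 0 2 (by decide)) ∧
    q (a 1 0 (by decide)) = algebraMap R CTref lam * q (a 0 1 (by decide)) ∧
    Algebra.adjoin R {q (a 0 1 (by decide))} = ⊤ := by

  have qrel : ∀ {x y : FA}, TrefoilRel x y → q x = q y := fun h => RingQuot.mkAlgHom_rel R h
  have hL00 := qrel (TrefoilRel.left 0 0)
  have hL11 := qrel (TrefoilRel.left 1 1)
  have hL22 := qrel (TrefoilRel.left 2 2)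
  have hR00 := qrel (TrefoilRel.right 0 0)
  have hR11 := qrel (TrefoilRel.right 1 1)
  have an01 : ∀ (h : (0:Fin 3) ≠ 1), a 0 1 h = a 0 1 (by decide) := fun _ => rfl
  have an02 : ∀ (h : (0:Fin 3) ≠ 2), a 0 2 h = a 0 2 (by decide) := fun _ => rfl
  have an10 : ∀ (h : (1:Fin 3) ≠ 0), a 1 0 h = a 1 0 (by decide) := fun _ => rfl
  have an12 : ∀ (h : (1:Fin 3) ≠ 2), a 1 2 h = a 1 2 (by decide) := fun _ => rfl
  have an20 : ∀ (h : (2:Fin 3) ≠ 0), a 2 0 h = a 2 0 (by decide) := fun _ => rfl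
  have an21 : ∀ (h : (2:Fin 3) ≠ 1), a 2 1 h = a 2 1 (by decide) := fun _ => rfl
  simp [PsiL, PsiR, Amat, Matrix.mul_apply, Fin.sum_univ_three] at hL00 hL11 hL22 hR00 hR11
  simp only [an01, an02, an10, an12, an20, an21] at hL00 hL11 hL22 hR00 hR11
  set L : R →+* CTref := algebraMap R CTref with hLdef
  set x12 := q (a 0 1 (by decide : (0:Fin 3) ≠ 1)) with hx12
  set x13 := q (a 0 2 (by decide : (0:Fin 3) ≠ 2)) with hx13
  set x21 := q (a 1 0 (by decide : (1:Fin 3) ≠ 0)) with hx21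
  set x23 := q (a 1 2 (by decide : (1:Fin 3) ≠ 2)) with hx23
  set x31 := q (a 2 0 (by decide : (2:Fin 3) ≠ 0)) with hx31
  set x32 := q (a 2 1 (by decide : (2:Fin 3) ≠ 1)) with hx32
  have c : ∀ (r : R) (x : CTref), x * L r = L r * x := fun r x => (Algebra.commutes r x).symm
  have Lli : L lamInv * L lam = 1 := by rw [← map_mul, lamInv_mul_lam, map_one]
  have Lmi : L muInv * L mu = 1 := by rw [← map_mul, muInv_mul_mu, map_one]
  have Llmi : L lamMuInv * L lamInvMu = 1 := by rw [← map_mul, lamMuInv_mul_lamInvMu, map_one]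
  have Llmm : L lamMuInv * L mu = L lam := by rw [← map_mul, lamMuInv_mul_mu]
  simp only [mul_add, add_mul, mul_one, one_mul, mul_neg, neg_mul, neg_neg, c] at hL00 hL11 hL22 hR00 hR11
  abel_nf at hL00 hL11 hL22 hR00 hR11
  simp only [mul_smul_comm] at hL00 hL11 hL22 hR00 hR11
  abel_nf at hL00 hL11 hL22
  have g1 : x31 = L lamInv * x21 := by
    have h := hL00
    rw [neg_smul, one_zsmul, neg_add_eq_zero] at h
    rw [h, ← mul_assoc, Lli, one_mul]
  have g3 : x32 = x12 := by
    have h := hL11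
    rw [neg_smul, one_zsmul, add_neg_eq_zero] at h
    exact h.symm
  have g5 : x23 = x13 := by
    have h := hL22
    rw [neg_smul, one_zsmul, add_neg_eq_zero] at h
    exact h
  have g2 : x13 = L lam * x12 := by
    have h := hR00
    rw [neg_smul, one_zsmul, neg_add_eq_zero] at h
    have h4 : L lamMuInv * (L mu * x12) = L lamMuInv * (L lamInvMu * x13) := by rw [h]
    rw [← mul_assoc, ← mul_assoc, Llmm, Llmi, one_mul] at h4
    exact h4.symm
  have g4 : x23 = x21 := by
    have h := hR11
    rw [neg_smul, one_zsmul, add_neg_eq_zero] at h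
    have h4 : L muInv * (L mu * x21) = L muInv * (L mu * x23) := by rw [h]
    rw [← mul_assoc, ← mul_assoc, Lmi, one_mul, one_mul] at h4
    exact h4.symm
  have g6 : x21 = L lam * x12 := by rw [← g4, g5, g2]
  refine ⟨g1, g2, g3, g4, g5, g6, ?_⟩
  rw [eq_top_iff]
  intro v hv
  clear hv
  obtain ⟨y, rfl⟩ := RingQuot.mkAlgHom_surjective R TrefoilRel v
  show q y ∈ Algebra.adjoin R {x12}
  induction y using FreeAlgebra.induction with
  | grade0 r => rw [AlgHom.commutes]; exact Subalgebra.algebraMap_mem _ r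
  | mul u v hu hv => rw [map_mul]; exact mul_mem hu hv
  | add u v hu hv => rw [map_add]; exact add_mem hu hv
  | grade1 i =>
      obtain ⟨⟨i, j⟩, hij⟩ := i
      have m12 : x12 ∈ Algebra.adjoin R {x12} := Algebra.self_mem_adjoin_singleton R _
      have m13 : x13 ∈ Algebra.adjoin R {x12} := by
        rw [g2]; exact Subalgebra.mul_mem _ (Subalgebra.algebraMap_mem _ _) m12
      have m21 : x21 ∈ Algebra.adjoin R {x12} := by
        rw [g6]; exact Subalgebra.mul_mem _ (Subalgebra.algebraMap_mem _ _) m12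
      have m23 : x23 ∈ Algebra.adjoin R {x12} := by rw [g4]; exact m21
      have m31 : x31 ∈ Algebra.adjoin R {x12} := by
        rw [g1]; exact Subalgebra.mul_mem _ (Subalgebra.algebraMap_mem _ _) m21
      have m32 : x32 ∈ Algebra.adjoin R {x12} := by rw [g3]; exact m12
      fin_cases i <;> fin_cases j
      · exact (hij rfl).elim
      · exact m12
      · exact m13
      · exact m21
      · exact (hij rfl).elim
      · exact m23
      · exact m31
      · exact m32
      · exact (hij rfl).elim
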